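/- Let X be a real random variable (on a probability space, with X^4 integrable) whose first, second and fourth moments satisfy E[X] = 0, E[X^2] = σ^2 > 0 and E[X^4] ≤ b·σ^4 for some real b > 0. Then P(X > σ/(4√b)) ≥ 1/(4^{4/3}·b). -/

import Mathlib

open MeasureTheory
open scoped ProbabilityTheory ENNReal

private lemma agk_enn1 : (4:ℝ≥0∞) / ENNReal.ofReal (4/3) = ENNReal.ofReal 3 := by
  refine (ENNReal.toReal_eq_toReal_iff' (ENNReal.div_lt_top (by norm_num)
    (by simp [ENNReal.ofReal_eq_zero])).ne ENNReal.ofReal_ne_top).mp ?_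
  rw [ENNReal.toReal_div, ENNReal.toReal_ofReal (by norm_num), ENNReal.toReal_ofReal (by norm_num)]
  norm_num

private lemma agk_enn2 : (1:ℝ≥0∞) / ENNReal.ofReal (2/3) = ENNReal.ofReal (3/2) := by
  refine (ENNReal.toReal_eq_toReal_iff' (ENNReal.div_lt_top (by norm_num)
    (by simp [ENNReal.ofReal_eq_zero])).ne ENNReal.ofReal_ne_top).mp ?_
  rw [ENNReal.toReal_div, ENNReal.toReal_ofReal (by norm_num), ENNReal.toReal_ofReal (by norm_num)]
  norm_num

private lemma agk_abs_pow_even (x : ℝ) : |x| ^ (4:ℕ) = x ^ 4 := by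
  rw [pow_abs, abs_of_nonneg (by positivity)]

private lemma agk_abs_sq (x : ℝ) : |x| ^ (2:ℕ) = x ^ 2 := by
  rw [pow_abs, abs_of_nonneg (by positivity)]

private lemma agk_memLp4 {Ω : Type*} [MeasureSpace Ω] [IsProbabilityMeasure (ℙ : Measure Ω)]
    {X : Ω → ℝ} (hX : Measurable X)
    (hint : Integrable (fun ω => (X ω) ^ 4)) : MemLp X 4 (ℙ : Measure Ω) := by
  rw [← memLp_norm_rpow_iff (q := 4) hX.aestronglyMeasurable (by norm_num) (by norm_num)]
  rw [ENNReal.div_self (by norm_num) (by norm_num), memLp_one_iff_integrable]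
  have : (fun x => ‖X x‖ ^ (4 : ℝ≥0∞).toReal) = fun ω => (X ω) ^ 4 := by
    funext ω
    rw [Real.norm_eq_abs, show ((4:ℝ≥0∞).toReal) = ((4:ℕ):ℝ) by norm_num,
      Real.rpow_natCast, agk_abs_pow_even]
  rw [this]; exact hint

private lemma agk_scalar1 (σ b : ℝ) (hσ : 0 < σ) (hb : 0 < b) :
    (σ / Real.sqrt b) ^ ((2:ℝ)/3) * (b * σ ^ 4) ^ ((1:ℝ)/3) = σ ^ 2 := by
  have hc : Real.sqrt b = b ^ ((1:ℝ)/2) := Real.sqrt_eq_rpow b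
  rw [hc, Real.div_rpow hσ.le (by positivity), ← Real.rpow_mul hb.le,
    Real.mul_rpow hb.le (by positivity), ← Real.rpow_natCast σ 4, ← Real.rpow_mul hσ.le,
    ← Real.rpow_natCast σ 2]
  norm_num
  rw [mul_comm (b ^ ((1:ℝ)/3)) (σ ^ ((4:ℝ)/3)), div_mul_eq_mul_div, ← mul_assoc,
    ← Real.rpow_add hσ, show (2:ℝ)/3 + 4/3 = ((2:ℕ):ℝ) by norm_num, Real.rpow_natCast,
    mul_div_assoc, div_self (by positivity), mul_one]

private lemma agk_scalar2 (b : ℝ) (hb : 0 < b) :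
    Real.sqrt b * b ^ ((1:ℝ)/4) = b ^ ((3:ℝ)/4) := by
  rw [Real.sqrt_eq_rpow, ← Real.rpow_add hb]
  norm_num

private lemma agk_scalar3 (σ b : ℝ) (hσ : 0 < σ) (hb : 0 < b) :
    (b * σ ^ 4) ^ ((1:ℝ)/4) = b ^ ((1:ℝ)/4) * σ := by
  rw [Real.mul_rpow hb.le (by positivity), ← Real.rpow_natCast σ 4, ← Real.rpow_mul hσ.le]
  norm_num

private lemma agk_scalar4 (b : ℝ) (hb : 0 < b) :
    ((1:ℝ) / (4 * b ^ ((3:ℝ)/4))) ^ ((4:ℝ)/3) = 1 / (4 ^ ((4:ℝ)/3) * b) := by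
  rw [Real.div_rpow (by norm_num) (by positivity), Real.one_rpow,
    Real.mul_rpow (by norm_num) (by positivity), ← Real.rpow_mul hb.le]
  norm_num

theorem alon_gutin_krivelevich_moment_inequality
    {Ω : Type*} [MeasureSpace Ω] [IsProbabilityMeasure (ℙ : Measure Ω)]
    {X : Ω → ℝ} (hX : Measurable X)
    (hint : Integrable (fun ω => (X ω) ^ 4))
    {σ b : ℝ} (hσ : 0 < σ) (hb : 0 < b)
    (h1 : (∫ ω, X ω) = 0)
    (h2 : (∫ ω, (X ω) ^ 2) = σ ^ 2)
    (h4 : (∫ ω, (X ω) ^ 4) ≤ b * σ ^ 4) :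
    1 / (4 ^ ((4 : ℝ) / 3) * b) ≤ (ℙ {ω | σ / (4 * Real.sqrt b) < X ω}).toReal := by
  set c : ℝ := Real.sqrt b with hc
  have hcpos : 0 < c := Real.sqrt_pos.mpr hb
  set θ : ℝ := σ / (4 * c) with hθ
  have hθpos : 0 < θ := by positivity
  set S : Set Ω := {ω | θ < X ω} with hS
  have hSm : MeasurableSet S := measurableSet_lt measurable_const hX
  set P : ℝ := ((ℙ : Measure Ω) S).toReal with hP
  have hPnn : 0 ≤ P := ENNReal.toReal_nonneg
  have hX4 : MemLp X 4 (ℙ : Measure Ω) := agk_memLp4 hX hint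
  have hX1 : MemLp X 1 (ℙ : Measure Ω) := hX4.mono_exponent (by norm_num)
  have hXint : Integrable X := memLp_one_iff_integrable.mp hX1
  have hAint : Integrable (fun ω => |X ω|) := hXint.abs
  set A : ℝ := ∫ ω, |X ω| with hA
  have hAnn : 0 ≤ A := integral_nonneg fun ω => abs_nonneg _
  have h4nn : 0 ≤ ∫ ω, (X ω) ^ 4 := integral_nonneg fun ω => by positivity
  -- First Hölder: σ^2 ≤ A^(2/3) * (∫ X^4)^(1/3)
  have holder1 : σ ^ 2 ≤ A ^ ((2:ℝ)/3) * (∫ ω, (X ω) ^ 4) ^ ((1:ℝ)/3) := by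
    have hpq : Real.HolderConjugate (3/2) 3 := by constructor <;> norm_num
    have hf : MemLp (fun ω => |X ω| ^ ((2:ℝ)/3)) (ENNReal.ofReal (3/2)) ℙ := by
      have h := hX1.norm_rpow_div (ENNReal.ofReal (2/3))
      rw [agk_enn2] at h
      convert h using 2 with ω
      rw [Real.norm_eq_abs, ENNReal.toReal_ofReal (by norm_num)]
    have hg : MemLp (fun ω => |X ω| ^ ((4:ℝ)/3)) (ENNReal.ofReal 3) ℙ := by
      have h := hX4.norm_rpow_div (ENNReal.ofReal (4/3))
      rw [agk_enn1] at h
      convert h using 2 with ω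
      rw [Real.norm_eq_abs, ENNReal.toReal_ofReal (by norm_num)]
    have key := integral_mul_le_Lp_mul_Lq_of_nonneg hpq
      (Filter.Eventually.of_forall fun ω => by positivity)
      (Filter.Eventually.of_forall fun ω => by positivity) hf hg
    have e1 : (∫ ω, |X ω| ^ ((2:ℝ)/3) * |X ω| ^ ((4:ℝ)/3)) = σ ^ 2 := by
      rw [← h2]
      refine integral_congr_ae (Filter.Eventually.of_forall fun ω => ?_)
      show |X ω| ^ ((2:ℝ)/3) * |X ω| ^ ((4:ℝ)/3) = X ω ^ 2
      rw [← Real.rpow_add' (abs_nonneg _) (by norm_num),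
        show ((2:ℝ)/3 + 4/3) = ((2:ℕ):ℝ) by norm_num,
        Real.rpow_natCast, agk_abs_sq]
    have e2 : (∫ ω, (|X ω| ^ ((2:ℝ)/3)) ^ ((3:ℝ)/2)) = A := by
      refine integral_congr_ae (Filter.Eventually.of_forall fun ω => ?_)
      show (|X ω| ^ ((2:ℝ)/3)) ^ ((3:ℝ)/2) = |X ω|
      rw [← Real.rpow_mul (abs_nonneg _)]
      norm_num
    have e3 : (∫ ω, (|X ω| ^ ((4:ℝ)/3)) ^ (3:ℝ)) = ∫ ω, (X ω) ^ 4 := by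
      refine integral_congr_ae (Filter.Eventually.of_forall fun ω => ?_)
      show (|X ω| ^ ((4:ℝ)/3)) ^ (3:ℝ) = X ω ^ 4
      rw [← Real.rpow_mul (abs_nonneg _),
        show ((4:ℝ)/3 * 3) = ((4:ℕ):ℝ) by norm_num,
        Real.rpow_natCast, agk_abs_pow_even]
    rw [e1, e2, e3] at key
    have : (1:ℝ)/(3/2) = 2/3 := by norm_num
    rw [this] at key
    exact key
  -- From holder1 : A ≥ σ / c
  have hAlb : σ / c ≤ A := by
    have hub : (∫ ω, (X ω) ^ 4) ^ ((1:ℝ)/3) ≤ (b * σ ^ 4) ^ ((1:ℝ)/3) :=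
      Real.rpow_le_rpow h4nn h4 (by norm_num)
    have h5 : σ ^ 2 ≤ A ^ ((2:ℝ)/3) * (b * σ ^ 4) ^ ((1:ℝ)/3) :=
      holder1.trans (mul_le_mul_of_nonneg_left hub (by positivity))
    have heq : (σ / c) ^ ((2:ℝ)/3) * (b * σ ^ 4) ^ ((1:ℝ)/3) = σ ^ 2 :=
      agk_scalar1 σ b hσ hb
    have hpos : (0:ℝ) < (b * σ ^ 4) ^ ((1:ℝ)/3) := by positivity
    have step : (σ/c) ^ ((2:ℝ)/3) ≤ A ^ ((2:ℝ)/3) := by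
      rw [← mul_le_mul_iff_of_pos_right hpos, heq]
      exact h5
    have h6 := Real.rpow_le_rpow (by positivity) step (by norm_num : (0:ℝ) ≤ 3/2)
    rwa [← Real.rpow_mul (by positivity : (0:ℝ) ≤ σ/c), ← Real.rpow_mul hAnn,
      show ((2:ℝ)/3 * (3/2)) = 1 by norm_num, Real.rpow_one, Real.rpow_one] at h6
  -- E[X⁺] = A/2
  have hposint : Integrable (fun ω => max (X ω) 0) := hXint.pos_part
  have hhalf : (∫ ω, max (X ω) 0) = A / 2 := by
    have hfun : (fun ω => max (X ω) 0) = fun ω => (X ω + |X ω|)/2 := by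
      funext ω
      rcases le_total 0 (X ω) with h | h
      · rw [max_eq_left h, abs_of_nonneg h]; ring
      · rw [max_eq_right h, abs_of_nonpos h]; ring
    rw [hfun, integral_div, integral_add hXint hAint, h1, zero_add]
  -- pointwise bound
  have hIndInt : Integrable (S.indicator fun ω => |X ω|) := hAint.indicator hSm
  have hbound : (∫ ω, max (X ω) 0) ≤ θ + ∫ ω, S.indicator (fun ω => |X ω|) ω := by
    have hmono : (∫ ω, max (X ω) 0) ≤ ∫ ω, (θ + S.indicator (fun ω => |X ω|) ω) := by
      apply integral_mono hposint ((integrable_const θ).add hIndInt)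
      intro ω
      simp only [Pi.add_apply]
      by_cases hω : ω ∈ S
      · rw [Set.indicator_of_mem hω]
        exact le_add_of_nonneg_of_le hθpos.le (max_le (le_abs_self _) (abs_nonneg _))
      · rw [Set.indicator_of_notMem hω, add_zero]
        exact max_le (le_of_not_gt hω) hθpos.le
    rwa [integral_add (integrable_const θ) hIndInt, integral_const, probReal_univ,
      one_smul] at hmono
  -- Second Hölder
  have holder2 : (∫ ω, S.indicator (fun ω => |X ω|) ω)
      ≤ (∫ ω, (X ω) ^ 4) ^ ((1:ℝ)/4) * P ^ ((3:ℝ)/4) := by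
    have hpq : Real.HolderConjugate 4 (4/3) := by constructor <;> norm_num
    have hf : MemLp (fun ω => |X ω|) (ENNReal.ofReal 4) ℙ := by
      have h := hX4.norm
      simp only [Real.norm_eq_abs] at h
      convert h using 1
      rw [show ENNReal.ofReal (4:ℝ) = 4 by norm_num]
    have hg : MemLp (S.indicator fun _ => (1:ℝ)) (ENNReal.ofReal (4/3)) ℙ :=
      memLp_indicator_const _ hSm 1 (Or.inr (measure_ne_top _ _))
    have key := integral_mul_le_Lp_mul_Lq_of_nonneg hpq
      (Filter.Eventually.of_forall fun ω => abs_nonneg _)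
      (Filter.Eventually.of_forall fun ω => Set.indicator_nonneg (fun _ _ => zero_le_one) ω)
      hf hg
    have e1 : (∫ ω, |X ω| * (S.indicator fun _ => (1:ℝ)) ω)
        = ∫ ω, S.indicator (fun ω => |X ω|) ω := by
      refine integral_congr_ae (Filter.Eventually.of_forall fun ω => ?_)
      show |X ω| * (S.indicator fun _ => (1:ℝ)) ω = S.indicator (fun ω => |X ω|) ω
      by_cases hω : ω ∈ S
      · rw [Set.indicator_of_mem hω, Set.indicator_of_mem hω, mul_one]
      · rw [Set.indicator_of_notMem hω, Set.indicator_of_notMem hω, mul_zero]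
    have e2 : (∫ ω, |X ω| ^ (4:ℝ)) = ∫ ω, (X ω) ^ 4 := by
      refine integral_congr_ae (Filter.Eventually.of_forall fun ω => ?_)
      show |X ω| ^ (4:ℝ) = X ω ^ 4
      rw [show (4:ℝ) = ((4:ℕ):ℝ) by norm_num, Real.rpow_natCast, agk_abs_pow_even]
    have e3 : (∫ ω, ((S.indicator fun _ => (1:ℝ)) ω) ^ ((4:ℝ)/3)) = P := by
      have : (∫ ω, ((S.indicator fun _ => (1:ℝ)) ω) ^ ((4:ℝ)/3))
          = ∫ ω, (S.indicator fun _ => (1:ℝ)) ω := by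
        refine integral_congr_ae (Filter.Eventually.of_forall fun ω => ?_)
        show ((S.indicator fun _ => (1:ℝ)) ω) ^ ((4:ℝ)/3) = (S.indicator fun _ => (1:ℝ)) ω
        by_cases hω : ω ∈ S
        · rw [Set.indicator_of_mem hω, Real.one_rpow]
        · rw [Set.indicator_of_notMem hω, Real.zero_rpow (by norm_num)]
      rw [this, integral_indicator_const (1:ℝ) hSm, smul_eq_mul, mul_one, hP, measureReal_def]
    rw [e1, e2, e3] at key
    rwa [show (1:ℝ)/(4/3) = 3/4 by norm_num] at key
  -- combine
  have h14 : (∫ ω, (X ω) ^ 4) ^ ((1:ℝ)/4) ≤ (b * σ ^ 4) ^ ((1:ℝ)/4) :=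
    Real.rpow_le_rpow h4nn h4 (by norm_num)
  have hmain : σ / (2*c) ≤ θ + b ^ ((1:ℝ)/4) * σ * P ^ ((3:ℝ)/4) := by
    have c1 : σ / (2*c) = (σ / c) / 2 := by ring
    have c2 : (σ / c)/2 ≤ A / 2 := by linarith
    calc σ / (2*c) = (σ/c)/2 := c1
      _ ≤ A/2 := c2
      _ = ∫ ω, max (X ω) 0 := hhalf.symm
      _ ≤ θ + ∫ ω, S.indicator (fun ω => |X ω|) ω := hbound
      _ ≤ θ + (∫ ω, (X ω) ^ 4) ^ ((1:ℝ)/4) * P ^ ((3:ℝ)/4) := by linarith [holder2]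
      _ ≤ θ + (b * σ ^ 4) ^ ((1:ℝ)/4) * P ^ ((3:ℝ)/4) := by
          have hmm := mul_le_mul_of_nonneg_right h14 (Real.rpow_nonneg hPnn ((3:ℝ)/4))
          linarith
      _ = θ + b ^ ((1:ℝ)/4) * σ * P ^ ((3:ℝ)/4) := by rw [agk_scalar3 σ b hσ hb]
  -- isolate P^(3/4)
  have hP34 : (1:ℝ) / (4 * b ^ ((3:ℝ)/4)) ≤ P ^ ((3:ℝ)/4) := by
    have hq : σ / (4*c) ≤ b ^ ((1:ℝ)/4) * σ * P ^ ((3:ℝ)/4) := by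
      have : σ / (2*c) - θ = σ / (4*c) := by
        rw [hθ]; field_simp; ring
      linarith [hmain]
    have hbpos : (0:ℝ) < b ^ ((1:ℝ)/4) := by positivity
    rw [div_le_iff₀ (by positivity)]
    have hcb : c * b ^ ((1:ℝ)/4) = b ^ ((3:ℝ)/4) := agk_scalar2 b hb
    have h7 : σ / (4*c) * (4 * b ^ ((3:ℝ)/4)) = b ^ ((1:ℝ)/4) * σ := by
      rw [← hcb]; field_simp
    have hq2 : σ / (4*c) * 1 ≤ σ / (4*c) * (P ^ ((3:ℝ)/4) * (4 * b ^ ((3:ℝ)/4))) := by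
      rw [mul_one]
      calc σ / (4*c) ≤ b ^ ((1:ℝ)/4) * σ * P ^ ((3:ℝ)/4) := hq
        _ = σ / (4*c) * (4 * b ^ ((3:ℝ)/4)) * P ^ ((3:ℝ)/4) := by rw [h7]
        _ = σ / (4*c) * (P ^ ((3:ℝ)/4) * (4 * b ^ ((3:ℝ)/4))) := by ring
    exact le_of_mul_le_mul_left hq2 (by positivity)
  -- raise to 4/3
  have hfinal : (1:ℝ) / (4 ^ ((4:ℝ)/3) * b) ≤ P := by
    have h9 := Real.rpow_le_rpow (by positivity) hP34 (by norm_num : (0:ℝ) ≤ 4/3)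
    rwa [agk_scalar4 b hb, ← Real.rpow_mul hPnn,
      show ((3:ℝ)/4 * (4/3)) = 1 by norm_num, Real.rpow_one] at h9
  exact hfinal
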